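/- Let M be an R-module that is Σ-C2, i.e., for every index set Λ the direct sum M^(Λ) satisfies the C2-condition. If M is a Σ-Rickart module, then M is a Σ-dual Rickart module. -/
import Mathlib


universe u v

/-- A module `M` is dual-Rickart if the image of every endomorphism is a direct summand. -/
def IsDualRickart (R : Type u) [Ring R] (M : Type v) [AddCommGroup M] [Module R M] : Prop :=
  ∀ φ : M →ₗ[R] M, ∃ q : Submodule R M, IsCompl (LinearMap.range φ) q

/-- A module `M` is Σ-dual Rickart if every direct sum of copies of `M` is dual-Rickart. -/
def IsSigmaDualRickart (R : Type u) [Ring R] (M : Type v) [AddCommGroup M] [Module R M] :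
    Prop :=
  ∀ Λ : Type v, IsDualRickart R (Λ →₀ M)

/-- A module `M` is Rickart if the kernel of every endomorphism is a direct summand. -/
def IsRickart (R : Type u) [Ring R] (M : Type v) [AddCommGroup M] [Module R M] : Prop :=
  ∀ φ : M →ₗ[R] M, ∃ q : Submodule R M, IsCompl (LinearMap.ker φ) q

/-- A module `M` is Σ-Rickart if every direct sum of copies of `M` is Rickart. -/
def IsSigmaRickart (R : Type u) [Ring R] (M : Type v) [AddCommGroup M] [Module R M] : Prop :=
  ∀ Λ : Type v, IsRickart R (Λ →₀ M)

/-- `M` satisfies the C2-condition: every submodule isomorphic to a direct summand is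
a direct summand. -/
def C2Cond (R : Type u) [Ring R] (M : Type v) [AddCommGroup M] [Module R M] : Prop :=
  ∀ N K : Submodule R M, (∃ K', IsCompl K K') → Nonempty (N ≃ₗ[R] K) →
    ∃ N', IsCompl N N'

/-- A Σ-C2, Σ-Rickart module is Σ-dual Rickart. -/
theorem stmt10 (R : Type u) [Ring R] (M : Type v) [AddCommGroup M] [Module R M]
    (hC2 : ∀ Λ : Type v, C2Cond R (Λ →₀ M)) (hM : IsSigmaRickart R M) :
    IsSigmaDualRickart R M := by
  intro Λ φ
  obtain ⟨q, hq⟩ := hM Λ φ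
  exact hC2 Λ (LinearMap.range φ) q ⟨_, hq.symm⟩
    ⟨(φ.quotKerEquivRange).symm.trans (Submodule.quotientEquivOfIsCompl _ _ hq)⟩
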